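/- Let 𝔾 = (I,Δ) be a discrete quantum semigroup with a right invariant mean 𝔪, and let f ∈ F(𝔾) be such that h := Δ(f) − f⊗1 − 1⊗f belongs to F_b(𝔾×𝔾) (here (f⊗1)(β,γ) = f(β)⊗1_{n(γ)} and (1⊗f)(β,γ) = 1_{n(β)}⊗f(γ)). Then Δ(f) − f⊗1 ∈ F_{b:1}(𝔾×𝔾), and F := (𝔪 ⊗̃ id)(Δ(f) − f⊗1) satisfies sup_{γ∈I} ‖F(γ) − f(γ)‖ ≤ sup_{β,γ∈I} ‖h(β,γ)‖. -/

import Mathlib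

open scoped Matrix.Norms.L2Operator Kronecker ComplexOrder

namespace DQSG

/-- The matrix algebra `M_k(ℂ)`. -/
abbrev Mat (k : ℕ) : Type := Matrix (Fin k) (Fin k) ℂ

/-- `M_k(ℂ) ⊗ M_l(ℂ)`, realized as matrices indexed by `Fin k × Fin l`. -/
abbrev Mat2 (k l : ℕ) : Type := Matrix (Fin k × Fin l) (Fin k × Fin l) ℂ

/-- `M_k(ℂ) ⊗ M_l(ℂ) ⊗ M_p(ℂ)`. -/
abbrev Mat3 (k l p : ℕ) : Type :=
  Matrix (Fin k × Fin l × Fin p) (Fin k × Fin l × Fin p) ℂ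

/-- The function algebra `F(I)` of an index system `(I, n)`. -/
abbrev FI {I : Type*} (n : I → ℕ) : Type _ := ∀ γ : I, Mat (n γ)

/-- The function algebra `F(I × J)`. -/
abbrev FI2 {I J : Type*} (n : I → ℕ) (m : J → ℕ) : Type _ :=
  ∀ (α : I) (β : J), Mat2 (n α) (m β)

/-- The function algebra `F(I × J × K)`. -/
abbrev FI3 {I J K : Type*} (n : I → ℕ) (m : J → ℕ) (p : K → ℕ) : Type _ :=
  ∀ (α : I) (β : J) (γ : K), Mat3 (n α) (m β) (p γ)

/-- The subspace `F_b(I)` of bounded functions in `F(I)` (w.r.t. the operator norm). -/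
noncomputable def Fb {I : Type*} (n : I → ℕ) : Submodule ℂ (FI n) where
  carrier := {f | ∃ C : ℝ, ∀ γ, ‖f γ‖ ≤ C}
  zero_mem' := ⟨0, fun γ => by simp⟩
  add_mem' := by
    rintro f g ⟨C, hC⟩ ⟨D, hD⟩
    exact ⟨C + D, fun γ => (norm_add_le _ _).trans (add_le_add (hC γ) (hD γ))⟩
  smul_mem' := by
    rintro c f ⟨C, hC⟩
    exact ⟨‖c‖ * C, fun γ => by
      rw [Pi.smul_apply, norm_smul]
      exact mul_le_mul_of_nonneg_left (hC γ) (norm_nonneg c)⟩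

/-- `F_{b:1}(I × J)`: functions bounded in the first variable, for each fixed
second variable. -/
def Fb1 {I J : Type*} {n : I → ℕ} {m : J → ℕ} (f : FI2 n m) : Prop :=
  ∀ β : J, ∃ C : ℝ, ∀ α : I, ‖f α β‖ ≤ C

/-- `F_{b:2}(I × J)`: functions bounded in the second variable, for each fixed
first variable. -/
def Fb2 {I J : Type*} {n : I → ℕ} {m : J → ℕ} (f : FI2 n m) : Prop :=
  ∀ α : I, ∃ C : ℝ, ∀ β : J, ‖f α β‖ ≤ C

/-- The slice `f_β^{ij} ∈ F(I)` of `f ∈ F(I × J)`,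
so that `f(α,β) = Σ_{i,j} f_β^{ij}(α) ⊗ e_β^{ij}`. -/
def slice2 {I J : Type*} {n : I → ℕ} {m : J → ℕ} (f : FI2 n m) (β : J)
    (i j : Fin (m β)) : FI n :=
  fun α => Matrix.of fun k l => f α β (k, i) (l, j)

/-- The slice `f_β^{ij} ∈ F(I)` of `f ∈ F(J × I)`,
so that `f(β,α) = Σ_{i,j} e_β^{ij} ⊗ f_β^{ij}(α)`. -/
def slice1 {I J : Type*} {n : I → ℕ} {m : J → ℕ} (f : FI2 m n) (β : J)
    (i j : Fin (m β)) : FI n :=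
  fun α => Matrix.of fun k l => f β α (i, k) (j, l)

/-- `T ⊗̃ id : F(I × J) → F(I' × J)` for a map `T : F(I) → F(I')`. -/
def tenR {I I' J : Type*} {n : I → ℕ} {n' : I' → ℕ} {m : J → ℕ}
    (T : FI n → FI n') (f : FI2 n m) : FI2 n' m :=
  fun α' β => Matrix.of fun u v => T (slice2 f β u.2 v.2) α' u.1 v.1

/-- `id ⊗̃ T : F(J × I) → F(J × I')` for a map `T : F(I) → F(I')`. -/
def tenL {I I' J : Type*} {n : I → ℕ} {n' : I' → ℕ} {m : J → ℕ}
    (T : FI n → FI n') (f : FI2 m n) : FI2 m n' :=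
  fun β α' => Matrix.of fun u v => T (slice1 f β u.1 v.1) α' u.2 v.2

/-- `T ⊗̃ id : F(I × J) → F(I₁ × I₂ × J)` for a map `T : F(I) → F(I₁ × I₂)`. -/
def tenR2 {I I₁ I₂ J : Type*} {n : I → ℕ} {n₁ : I₁ → ℕ} {n₂ : I₂ → ℕ} {m : J → ℕ}
    (T : FI n → FI2 n₁ n₂) (f : FI2 n m) : FI3 n₁ n₂ m :=
  fun β₁ β₂ γ => Matrix.of fun u v =>
    T (slice2 f γ u.2.2 v.2.2) β₁ β₂ (u.1, u.2.1) (v.1, v.2.1)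

/-- `id ⊗̃ T : F(J × I) → F(J × I₁ × I₂)` for a map `T : F(I) → F(I₁ × I₂)`. -/
def tenL2 {I I₁ I₂ J : Type*} {n : I → ℕ} {n₁ : I₁ → ℕ} {n₂ : I₂ → ℕ} {m : J → ℕ}
    (T : FI n → FI2 n₁ n₂) (f : FI2 m n) : FI3 m n₁ n₂ :=
  fun γ β₁ β₂ => Matrix.of fun u v =>
    T (slice1 f γ u.1 v.1) β₁ β₂ u.2 v.2

open scoped Classical in
/-- Apply a functional defined on `F_b(I)` to an arbitrary element of `F(I)`,
extended by `0` off `F_b(I)`. -/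
noncomputable def apF {I : Type*} {n : I → ℕ} (𝔪 : Fb n →ₗ[ℂ] ℂ) (g : FI n) : ℂ :=
  if h : g ∈ Fb n then 𝔪 ⟨g, h⟩ else 0

/-- `𝔪 ⊗̃ id : F(I × J) → F(J)` for a functional `𝔪` on `F_b(I)`. -/
noncomputable def fTenR {I J : Type*} {n : I → ℕ} {m : J → ℕ}
    (𝔪 : Fb n →ₗ[ℂ] ℂ) (f : FI2 n m) : FI m :=
  fun β => Matrix.of fun i j => apF 𝔪 (slice2 f β i j)

/-- `id ⊗̃ 𝔪 : F(J × I) → F(J)` for a functional `𝔪` on `F_b(I)`. -/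
noncomputable def fTenL {I J : Type*} {n : I → ℕ} {m : J → ℕ}
    (𝔪 : Fb n →ₗ[ℂ] ℂ) (f : FI2 m n) : FI m :=
  fun β => Matrix.of fun i j => apF 𝔪 (slice1 f β i j)

/-- `𝔪 ⊗̃ id ⊗̃ id : F(I × J × K) → F(J × K)` for a functional `𝔪` on `F_b(I)`. -/
noncomputable def fTenR3 {I J K : Type*} {n : I → ℕ} {m : J → ℕ} {p : K → ℕ}
    (𝔪 : Fb n →ₗ[ℂ] ℂ) (f : FI3 n m p) : FI2 m p :=
  fun β γ => Matrix.of fun u v =>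
    apF 𝔪 (fun α => Matrix.of fun k l => f α β γ (k, u) (l, v))

/-- A state on the C*-algebra `F_b(I)`: a positive linear functional with `𝔪(1) = 1`. -/
def IsState {I : Type*} {n : I → ℕ} (𝔪 : Fb n →ₗ[ℂ] ℂ) : Prop :=
  (∀ g : FI n, g ∈ Fb n → 0 ≤ apF 𝔪 (star g * g)) ∧ apF 𝔪 1 = 1

/-- A comultiplication on the index system `(I, n)`, i.e. the structure of a
discrete quantum semigroup. `D α β γ` is the *-homomorphism
`Δ^α_{β,γ} : M_{n(α)} → M_{n(β)} ⊗ M_{n(γ)}`. -/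
structure Comul {I : Type*} (n : I → ℕ) where
  /-- the family of *-homomorphisms `Δ^α_{β,γ}` -/
  D : ∀ α β γ : I, Mat (n α) → Mat2 (n β) (n γ)
  linear : ∀ α β γ, IsLinearMap ℂ (D α β γ)
  map_mul' : ∀ α β γ x y, D α β γ (x * y) = D α β γ x * D α β γ y
  map_star' : ∀ α β γ x, D α β γ (star x) = star (D α β γ x)
  /-- condition (i): `Δ^α_{β,γ}(1) Δ^{α'}_{β,γ}(1) = 0` for `α ≠ α'` -/
  orth : ∀ β γ α α' : I, α ≠ α' → D α β γ 1 * D α' β γ 1 = 0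
  /-- for fixed `β, γ` only finitely many `Δ^α_{β,γ}` are nonzero
  (a consequence of condition (i), included as data) -/
  finite : ∀ β γ : I, {α : I | D α β γ ≠ 0}.Finite
  /-- condition (ii): coassociativity
  `Σ_ω (Δ^ω_{α,β} ⊗ id) ∘ Δ^λ_{ω,γ} = Σ_ω (id ⊗ Δ^ω_{β,γ}) ∘ Δ^λ_{α,ω}`,
  written entrywise. -/
  coassoc : ∀ (lam α β γ : I) (x : Mat (n lam)) (p p' : Fin (n α))
      (q q' : Fin (n β)) (r r' : Fin (n γ)),
      ∑ᶠ ω : I, D ω α β (Matrix.of fun k l => D lam ω γ x (k, r) (l, r')) (p, q) (p', q')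
        = ∑ᶠ ω : I, D ω β γ (Matrix.of fun k l => D lam α ω x (p, k) (p', l)) (q, r) (q', r')

/-- The induced *-homomorphism `Δ : F(I) → F(I × I)`,
`[Δ(f)](β,γ) = Σ_α Δ^α_{β,γ}(f(α))`. -/
noncomputable def Comul.ind {I : Type*} {n : I → ℕ} (C : Comul n) (f : FI n) :
    FI2 n n :=
  fun β γ => ∑ᶠ α : I, C.D α β γ (f α)

/-- A right invariant mean for a discrete quantum semigroup: a state `𝔪` on
`F_b(𝔾)` with `(𝔪 ⊗̃ id)(Δ f) = 𝔪(f)·1` for all `f ∈ F_b(𝔾)`. -/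
def IsRIMean {I : Type*} {n : I → ℕ} (C : Comul n) (𝔪 : Fb n →ₗ[ℂ] ℂ) : Prop :=
  IsState 𝔪 ∧ ∀ f : FI n, f ∈ Fb n →
    fTenR 𝔪 (C.ind f) = fun γ => apF 𝔪 f • (1 : Mat (n γ))

/-- A left invariant mean for a discrete quantum semigroup: a state `𝔪` on
`F_b(𝔾)` with `(id ⊗̃ 𝔪)(Δ f) = 𝔪(f)·1` for all `f ∈ F_b(𝔾)`. -/
def IsLIMean {I : Type*} {n : I → ℕ} (C : Comul n) (𝔪 : Fb n →ₗ[ℂ] ℂ) : Prop :=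
  IsState 𝔪 ∧ ∀ f : FI n, f ∈ Fb n →
    fTenL 𝔪 (C.ind f) = fun γ => apF 𝔪 f • (1 : Mat (n γ))

/-- A *-homomorphism between function algebras: a linear, multiplicative,
star-preserving map. -/
def IsStarHom {I J : Type*} {n : I → ℕ} {m : J → ℕ} (T : FI n → FI m) : Prop :=
  IsLinearMap ℂ T ∧ (∀ f g, T (f * g) = T f * T g) ∧ ∀ f, T (star f) = star (T f)

open scoped Classical in
/-- Apply a map defined on `F_b(I)` to an arbitrary element of `F(I)`,
extended by `0` off `F_b(I)`. -/
noncomputable def apTb {I J : Type*} {n : I → ℕ} {m : J → ℕ}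
    (T : Fb n → FI m) (g : FI n) : FI m :=
  if h : g ∈ Fb n then T ⟨g, h⟩ else 0

/-- `T ⊗̃ id : F_{b:1}(I × J) → F(I' × J)` for a map `T` defined on `F_b(I)`. -/
noncomputable def tenRb {I I' J : Type*} {n : I → ℕ} {n' : I' → ℕ} {m : J → ℕ}
    (T : Fb n → FI n') (f : FI2 n m) : FI2 n' m :=
  fun α' β => Matrix.of fun u v => apTb T (slice2 f β u.2 v.2) α' u.1 v.1

open scoped Classical in
/-- The canonical embedding `I_α : M_{n(α)} → F(I)` as functions supported at `α`:
`emb α x` is the element of `F(I)` that is `x` at `α` and `0` elsewhere. -/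
noncomputable def emb {I : Type*} {n : I → ℕ} (α : I) (x : Mat (n α)) : FI n :=
  Function.update (0 : FI n) α x

/-- The canonical identification `ℂ = M_1(ℂ) → M_1(ℂ) ⊗ M_1(ℂ)` (the identity map). -/
def e11 : Mat 1 → Mat2 1 1 := fun x => Matrix.of fun u v => x u.1 v.1

/-- The C*-algebra `ℓ∞(G)` of bounded complex-valued functions on `G`,
as a subspace of all complex-valued functions. -/
noncomputable def Fbc (G : Type*) : Submodule ℂ (G → ℂ) where
  carrier := {f | ∃ C : ℝ, ∀ x, ‖f x‖ ≤ C}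
  zero_mem' := ⟨0, fun x => by simp⟩
  add_mem' := by
    rintro f g ⟨C, hC⟩ ⟨D, hD⟩
    exact ⟨C + D, fun x => (norm_add_le _ _).trans (add_le_add (hC x) (hD x))⟩
  smul_mem' := by
    rintro c f ⟨C, hC⟩
    exact ⟨‖c‖ * C, fun x => by
      rw [Pi.smul_apply, norm_smul]
      exact mul_le_mul_of_nonneg_left (hC x) (norm_nonneg c)⟩

open scoped Classical in
/-- Apply a functional defined on `ℓ∞(G)` to an arbitrary function,
extended by `0` off `ℓ∞(G)`. -/
noncomputable def apC {G : Type*} (m : Fbc G →ₗ[ℂ] ℂ) (g : G → ℂ) : ℂ :=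
  if h : g ∈ Fbc G then m ⟨g, h⟩ else 0

/-- A state on the C*-algebra `ℓ∞(G)`: a positive linear functional
taking the value `1` at the constant function `1`. -/
def IsCState {G : Type*} (m : Fbc G →ₗ[ℂ] ℂ) : Prop :=
  (∀ g : G → ℂ, g ∈ Fbc G → 0 ≤ apC m (star g * g)) ∧ apC m 1 = 1


open Matrix
section AuxNorm

lemma norm_one_le_mat (p : ℕ) : ‖(1 : Mat p)‖ ≤ 1 := by
  rw [Matrix.l2_opNorm_def]
  refine ContinuousLinearMap.opNorm_le_bound _ zero_le_one fun x => ?_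
  simp [Matrix.toEuclideanLin_apply, Matrix.one_mulVec]

/-- The rectangular matrix `X_x : ℂ^p → ℂ^p ⊗ ℂ^m` given by `v ↦ v ⊗ x`. -/
def Xmat (p m : ℕ) (x : Fin m → ℂ) : Matrix (Fin p × Fin m) (Fin p) ℂ :=
  Matrix.of fun ki l => if ki.1 = l then x ki.2 else 0

/-- The Euclidean norm of a finite vector. -/
noncomputable def l2n {m : ℕ} (x : Fin m → ℂ) : ℝ := Real.sqrt (∑ i, ‖x i‖^2)

lemma l2n_nonneg {m : ℕ} (x : Fin m → ℂ) : 0 ≤ l2n x := Real.sqrt_nonneg _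

lemma l2n_sq {m : ℕ} (x : Fin m → ℂ) : l2n x ^ 2 = ∑ i, ‖x i‖^2 :=
  Real.sq_sqrt (Finset.sum_nonneg fun _ _ => sq_nonneg _)

lemma Xmat_mul (p m : ℕ) (x : Fin m → ℂ) :
    (Xmat p m x)ᴴ * (Xmat p m x) = ((l2n x ^ 2 : ℝ) : ℂ) • (1 : Mat p) := by
  ext l l'
  simp only [Matrix.mul_apply, Matrix.conjTranspose_apply, Xmat, Matrix.of_apply,
    Fintype.sum_prod_type, Matrix.smul_apply, Matrix.one_apply, l2n_sq]
  by_cases hl : l = l'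
  · subst hl
    simp [RCLike.conj_mul]
  · simp [hl, Ne.symm hl]

lemma norm_Xmat_le (p m : ℕ) (x : Fin m → ℂ) : ‖Xmat p m x‖ ≤ l2n x := by
  have h1 : ‖Xmat p m x‖ * ‖Xmat p m x‖ = ‖(Xmat p m x)ᴴ * (Xmat p m x)‖ :=
    (Matrix.l2_opNorm_conjTranspose_mul_self _).symm
  rw [Xmat_mul] at h1
  have h2 : ‖((l2n x ^ 2 : ℝ) : ℂ) • (1 : Mat p)‖ ≤ l2n x ^ 2 := by
    rw [norm_smul]
    calc ‖((l2n x ^ 2 : ℝ) : ℂ)‖ * ‖(1 : Mat p)‖ ≤ ‖((l2n x ^ 2 : ℝ) : ℂ)‖ * 1 :=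
          mul_le_mul_of_nonneg_left (norm_one_le_mat p) (norm_nonneg _)
      _ = l2n x ^ 2 := by rw [mul_one, Complex.norm_real, Real.norm_of_nonneg (sq_nonneg _)]
  nlinarith [norm_nonneg (Xmat p m x), l2n_nonneg x, h1, h2]

lemma mul_Xmat_apply {A : Type*} [Fintype A] (p m : ℕ) (G : Matrix A (Fin p × Fin m) ℂ)
    (x : Fin m → ℂ) (a : A) (l : Fin p) :
    (G * Xmat p m x) a l = ∑ j, x j * G a (l, j) := by
  simp only [Matrix.mul_apply, Xmat, Matrix.of_apply, Fintype.sum_prod_type,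
    mul_ite, mul_zero]
  rw [Finset.sum_comm]
  simp [Finset.sum_ite_eq, mul_comm]

lemma Xmat_conjTranspose_mul_apply {A : Type*} [Fintype A] (p m : ℕ)
    (G : Matrix (Fin p × Fin m) A ℂ) (y : Fin m → ℂ) (k : Fin p) (a : A) :
    ((Xmat p m y)ᴴ * G) k a = ∑ i, (starRingEnd ℂ) (y i) * G (k, i) a := by
  simp only [Matrix.mul_apply, Matrix.conjTranspose_apply, Xmat, Matrix.of_apply,
    Fintype.sum_prod_type, apply_ite (star : ℂ → ℂ), star_zero, ite_mul, zero_mul]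
  rw [Finset.sum_comm]
  simp only [Finset.sum_ite_eq', Finset.mem_univ, if_true, starRingEnd_apply]

lemma compress_eq (p m : ℕ) (H : Matrix (Fin p × Fin m) (Fin p × Fin m) ℂ) (y x : Fin m → ℂ) :
    (Xmat p m y)ᴴ * H * (Xmat p m x)
      = Matrix.of fun k l => ∑ i, ∑ j, (starRingEnd ℂ) (y i) * x j * H (k, i) (l, j) := by
  ext k l
  rw [mul_Xmat_apply, Matrix.of_apply]
  rw [Finset.sum_congr rfl fun j _ => by rw [Xmat_conjTranspose_mul_apply, Finset.mul_sum]]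
  rw [Finset.sum_comm]
  exact Finset.sum_congr rfl fun i _ => Finset.sum_congr rfl fun j _ => by ring

lemma norm_compress_le (p m : ℕ) (H : Matrix (Fin p × Fin m) (Fin p × Fin m) ℂ)
    (y x : Fin m → ℂ) {c : ℝ} (hH : ‖H‖ ≤ c) :
    ‖(Xmat p m y)ᴴ * H * (Xmat p m x)‖ ≤ l2n y * c * l2n x := by
  have hc : 0 ≤ c := le_trans (norm_nonneg _) hH
  calc ‖(Xmat p m y)ᴴ * H * (Xmat p m x)‖
      ≤ ‖(Xmat p m y)ᴴ * H‖ * ‖Xmat p m x‖ := Matrix.l2_opNorm_mul _ _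
    _ ≤ ‖(Xmat p m y)ᴴ‖ * ‖H‖ * ‖Xmat p m x‖ :=
        mul_le_mul_of_nonneg_right (Matrix.l2_opNorm_mul _ _) (norm_nonneg _)
    _ ≤ l2n y * c * l2n x := by
        rw [Matrix.l2_opNorm_conjTranspose]
        exact mul_le_mul (mul_le_mul (norm_Xmat_le p m y) hH (norm_nonneg H) (l2n_nonneg y))
          (norm_Xmat_le p m x) (norm_nonneg _) (mul_nonneg (l2n_nonneg y) hc)

lemma l2n_single (m : ℕ) (j : Fin m) : l2n (Pi.single j 1 : Fin m → ℂ) = 1 := by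
  have h : (∑ i, ‖(Pi.single j 1 : Fin m → ℂ) i‖^2) = 1 := by
    rw [Finset.sum_eq_single j] <;> simp +contextual [Pi.single_apply]
  rw [l2n, h, Real.sqrt_one]

lemma kron_one_eq (p m : ℕ) (B : Mat m) :
    (1 : Mat p) ⊗ₖ B = ∑ j, (Xmat p m (fun i => B i j)) * (Xmat p m (Pi.single j 1))ᴴ := by
  ext ki lj
  obtain ⟨k, i⟩ := ki
  obtain ⟨l, j'⟩ := lj
  have h : ∀ j, ((Xmat p m (fun i => B i j)) * (Xmat p m (Pi.single j 1))ᴴ) (k,i) (l,j')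
      = (if k = l then B i j else 0) * (if j' = j then 1 else 0) := by
    intro j
    simp only [Matrix.mul_apply, Matrix.conjTranspose_apply, Xmat, Matrix.of_apply,
      apply_ite (star : ℂ → ℂ), star_zero, ite_mul, zero_mul, mul_ite, mul_zero, Pi.single_apply]
    simp only [Fintype.sum_prod_type, Finset.sum_ite_eq, Finset.sum_ite_eq',
      Finset.mem_univ, if_true]
    split_ifs <;> simp_all
  simp only [Matrix.sum_apply, h, Matrix.kroneckerMap_apply, Matrix.one_apply]
  rw [Finset.sum_eq_single j']
  · simp
  · intro b _ hb
    simp [Ne.symm hb, hb]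
  · simp

lemma norm_kron_one_le (p m : ℕ) (B : Mat m) :
    ‖(1 : Mat p) ⊗ₖ B‖ ≤ ∑ j, l2n (fun i => B i j) := by
  rw [kron_one_eq]
  refine (norm_sum_le _ _).trans (Finset.sum_le_sum fun j _ => ?_)
  calc ‖(Xmat p m (fun i => B i j)) * (Xmat p m (Pi.single j 1))ᴴ‖
      ≤ ‖Xmat p m (fun i => B i j)‖ * ‖(Xmat p m (Pi.single j 1))ᴴ‖ := Matrix.l2_opNorm_mul _ _
    _ ≤ l2n (fun i => B i j) * 1 := by
        rw [Matrix.l2_opNorm_conjTranspose]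
        exact mul_le_mul (norm_Xmat_le _ _ _) ((norm_Xmat_le _ _ _).trans_eq (l2n_single m j))
          (norm_nonneg _) (l2n_nonneg _)
    _ = l2n (fun i => B i j) := mul_one _

end AuxNorm
section AuxFunc
open Matrix
variable {I : Type*} {n : I → ℕ} (𝔪 : Fb n →ₗ[ℂ] ℂ)

lemma apF_of_mem {g : FI n} (hg : g ∈ Fb n) : apF 𝔪 g = 𝔪 ⟨g, hg⟩ := dif_pos hg

lemma one_mem_Fb : (1 : FI n) ∈ Fb n := ⟨1, fun β => norm_one_le_mat _⟩

lemma apF_add {a b : FI n} (ha : a ∈ Fb n) (hb : b ∈ Fb n) :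
    apF 𝔪 (a + b) = apF 𝔪 a + apF 𝔪 b := by
  rw [apF_of_mem 𝔪 ha, apF_of_mem 𝔪 hb, apF_of_mem 𝔪 (add_mem ha hb), ← map_add]
  rfl

lemma apF_smul (z : ℂ) {a : FI n} (ha : a ∈ Fb n) :
    apF 𝔪 (z • a) = z * apF 𝔪 a := by
  rw [apF_of_mem 𝔪 ha, apF_of_mem 𝔪 (Submodule.smul_mem _ z ha)]
  have : (⟨z • a, Submodule.smul_mem _ z ha⟩ : Fb n) = z • ⟨a, ha⟩ := rfl
  rw [this, LinearMap.map_smul, smul_eq_mul]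

lemma apF_sub {a b : FI n} (ha : a ∈ Fb n) (hb : b ∈ Fb n) :
    apF 𝔪 (a - b) = apF 𝔪 a - apF 𝔪 b := by
  rw [apF_of_mem 𝔪 ha, apF_of_mem 𝔪 hb, apF_of_mem 𝔪 (sub_mem ha hb), ← map_sub]
  rfl

lemma apF_sum {ι : Type*} (s : Finset ι) (F : ι → FI n) (hF : ∀ i ∈ s, F i ∈ Fb n) :
    apF 𝔪 (∑ i ∈ s, F i) = ∑ i ∈ s, apF 𝔪 (F i) := by
  classical
  induction s using Finset.induction_on with
  | empty =>
    rw [Finset.sum_empty, Finset.sum_empty, apF_of_mem 𝔪 (zero_mem (Fb n))]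
    exact map_zero 𝔪
  | insert _ _ hx ih =>
    rename_i a s
    rw [Finset.sum_insert hx, Finset.sum_insert hx,
      apF_add 𝔪 (hF a (Finset.mem_insert_self a s))
        (Submodule.sum_mem _ fun i hi => hF i (Finset.mem_insert_of_mem hi)),
      ih fun i hi => hF i (Finset.mem_insert_of_mem hi)]

lemma posSemidef_smul_one_sub {p : ℕ} {B : Mat p} (hB : B.IsHermitian) {c : ℝ}
    (hnorm : ‖B‖ ≤ c) : (((c : ℂ) • 1 - B) : Mat p).PosSemidef := by
  rw [Matrix.posSemidef_iff_dotProduct_mulVec]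
  constructor
  · rw [Matrix.IsHermitian, Matrix.conjTranspose_sub, Matrix.conjTranspose_smul,
      Matrix.conjTranspose_one, hB.eq]
    norm_num [Complex.star_def, Complex.conj_ofReal]
  · intro x
    rw [Matrix.sub_mulVec, Matrix.smul_mulVec, Matrix.one_mulVec,
      dotProduct_sub, dotProduct_smul]
    set x' : EuclideanSpace ℂ (Fin p) := (WithLp.equiv 2 _).symm x with hx'
    have e1 : dotProduct (star x) x = ((‖x'‖^2 : ℝ) : ℂ) := by
      have := EuclideanSpace.inner_eq_star_dotProduct x' x'
      rw [inner_self_eq_norm_sq_to_K] at this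
      simpa [hx', dotProduct_comm] using this.symm
    set z := dotProduct (star x) (B *ᵥ x) with hz
    have e2 : z = inner ℂ x' ((WithLp.equiv 2 _).symm (B *ᵥ x)) := by
      rw [EuclideanSpace.inner_eq_star_dotProduct]
      simp [hx']
      rw [hz, dotProduct_comm]
    have habs : ‖z‖ ≤ c * ‖x'‖^2 := by
      rw [e2]
      calc ‖(inner ℂ x' ((WithLp.equiv 2 _).symm (B *ᵥ x)) : ℂ)‖
          ≤ ‖x'‖ * ‖(WithLp.equiv 2 _).symm (B *ᵥ x)‖ := norm_inner_le_norm _ _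
        _ ≤ ‖x'‖ * (‖B‖ * ‖x'‖) := by
            refine mul_le_mul_of_nonneg_left ?_ (norm_nonneg _)
            have := Matrix.l2_opNorm_mulVec B x'
            simpa [hx'] using this
        _ ≤ c * ‖x'‖^2 := by nlinarith [norm_nonneg x', norm_nonneg B]
    have him : z.im = 0 := by
      have hstar : star z = z := by
        conv_lhs => rw [hz, star_dotProduct, star_star, Matrix.star_mulVec, hB.eq,
          ← dotProduct_mulVec]
      have h2 : -z.im = z.im := by
        simpa [Complex.star_def] using congrArg Complex.im hstar
      linarith
    have hre : z.re ≤ c * ‖x'‖^2 :=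
      le_trans (Complex.re_le_norm z) habs
    rw [Complex.le_def]
    constructor
    · rw [e1]
      simp only [Complex.sub_re, Complex.zero_re, smul_eq_mul, Complex.mul_re,
        Complex.ofReal_re, Complex.ofReal_im]
      nlinarith [hre]
    · rw [e1]
      simp only [Complex.sub_im, Complex.zero_im, smul_eq_mul, Complex.mul_im,
        Complex.ofReal_re, Complex.ofReal_im, him]
      ring

end AuxFunc
section AuxState
open Matrix

section SqrtCompat
open scoped MatrixOrder

/-- Square root of a positive semidefinite matrix (via the CFC). -/
noncomputable def _root_.Matrix.PosSemidef.sqrt {p : ℕ} {A : Mat p} (_hA : A.PosSemidef) :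
    Mat p := CFC.sqrt A

lemma _root_.Matrix.PosSemidef.posSemidef_sqrt {p : ℕ} {A : Mat p} (hA : A.PosSemidef) :
    hA.sqrt.PosSemidef := (CFC.sqrt_nonneg A).posSemidef

lemma _root_.Matrix.PosSemidef.sqrt_mul_self {p : ℕ} {A : Mat p} (hA : A.PosSemidef) :
    hA.sqrt * hA.sqrt = A := CFC.sqrt_mul_sqrt_self A hA.nonneg

end SqrtCompat
variable {I : Type*} {n : I → ℕ} {𝔪 : Fb n →ₗ[ℂ] ℂ}

lemma exists_sqrt_decomp {b : FI n} (hsa : star b = b) {c : ℝ} (hc : 0 ≤ c)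
    (hb : ∀ β, ‖b β‖ ≤ c) :
    ∃ g : FI n, g ∈ Fb n ∧ star g * g = (c : ℂ) • (1 : FI n) - b := by
  have hherm : ∀ β, (b β).IsHermitian := by
    intro β
    have := congrFun hsa β
    exact this
  have hPSD : ∀ β, (((c : ℂ) • 1 - b β) : Mat (n β)).PosSemidef := fun β =>
    posSemidef_smul_one_sub (hherm β) (hb β)
  refine ⟨fun β => (hPSD β).sqrt, ?_, ?_⟩
  · refine ⟨Real.sqrt (2 * c), fun β => ?_⟩
    have h1 : ‖(hPSD β).sqrt‖ * ‖(hPSD β).sqrt‖ = ‖((c : ℂ) • 1 - b β : Mat (n β))‖ := by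
      rw [← Matrix.l2_opNorm_conjTranspose_mul_self]
      congr 1
      rw [show ((hPSD β).sqrt)ᴴ = (hPSD β).sqrt from (hPSD β).posSemidef_sqrt.1,
        (hPSD β).sqrt_mul_self]
    have h2 : ‖((c : ℂ) • 1 - b β : Mat (n β))‖ ≤ 2 * c := by
      calc ‖((c : ℂ) • 1 - b β : Mat (n β))‖ ≤ ‖((c : ℂ) • 1 : Mat (n β))‖ + ‖b β‖ :=
            norm_sub_le _ _
        _ ≤ c + c := by
            refine add_le_add ?_ (hb β)
            rw [norm_smul]
            calc ‖(c : ℂ)‖ * ‖(1 : Mat (n β))‖ ≤ ‖(c : ℂ)‖ * 1 :=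
                  mul_le_mul_of_nonneg_left (norm_one_le_mat _) (norm_nonneg _)
              _ = c := by rw [mul_one, Complex.norm_real, Real.norm_of_nonneg hc]
        _ = 2 * c := by ring
    nlinarith [norm_nonneg ((hPSD β).sqrt), Real.sq_sqrt (by linarith : (0:ℝ) ≤ 2 * c),
      Real.sqrt_nonneg (2 * c)]
  · funext β
    show star ((hPSD β).sqrt) * (hPSD β).sqrt = (c : ℂ) • 1 - b β
    rw [Matrix.star_eq_conjTranspose,
      show ((hPSD β).sqrt)ᴴ = (hPSD β).sqrt from (hPSD β).posSemidef_sqrt.1,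
      (hPSD β).sqrt_mul_self]

lemma state_re_le (hst : IsState 𝔪) {b : FI n} (hsa : star b = b) {c : ℝ} (hc : 0 ≤ c)
    (hb : ∀ β, ‖b β‖ ≤ c) : (apF 𝔪 b).re ≤ c ∧ (apF 𝔪 b).im = 0 := by
  have hbFb : b ∈ Fb n := ⟨c, hb⟩
  obtain ⟨g, hgFb, hgg⟩ := exists_sqrt_decomp hsa hc hb
  have hpos := hst.1 g hgFb
  rw [hgg] at hpos
  have heq : apF 𝔪 ((c : ℂ) • (1 : FI n) - b) = (c : ℂ) - apF 𝔪 b := by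
    rw [apF_sub 𝔪 (Submodule.smul_mem _ _ (one_mem_Fb )) hbFb, apF_smul 𝔪 _ (one_mem_Fb),
      hst.2, mul_one]
  rw [heq, Complex.le_def] at hpos
  obtain ⟨h1, h2⟩ := hpos
  constructor
  · simp only [Complex.sub_re, Complex.ofReal_re, Complex.zero_re] at h1 ⊢
    linarith
  · simp only [Complex.sub_im, Complex.ofReal_im, Complex.zero_im] at h2 ⊢
    linarith

lemma star_mem_Fb {a : FI n} (ha : a ∈ Fb n) : star a ∈ Fb n := by
  obtain ⟨C, hC⟩ := ha
  exact ⟨C, fun β => by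
    rw [show (star a) β = (a β)ᴴ from rfl, Matrix.l2_opNorm_conjTranspose]
    exact hC β⟩

lemma apF_star (hst : IsState 𝔪) {a : FI n} (ha : a ∈ Fb n) :
    apF 𝔪 (star a) = (starRingEnd ℂ) (apF 𝔪 a) := by
  obtain ⟨C, hC⟩ := ha
  have hC0 : ∀ β, ‖a β‖ ≤ max C 0 := fun β => (hC β).trans (le_max_left _ _)
  have hc : (0:ℝ) ≤ max C 0 := le_max_right _ _
  have ha : a ∈ Fb n := ⟨C, hC⟩
  set b : FI n := ((1:ℂ)/2) • (a + star a) with hbdef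
  set d : FI n := (Complex.I/2) • (star a - a) with hddef
  have hb_sa : star b = b := by
    rw [hbdef, star_smul, star_add, star_star]
    simp [add_comm]
  have hd_sa : star d = d := by
    rw [hddef, star_smul, star_sub, star_star]
    simp only [star_div₀, Complex.star_def, Complex.conj_I, map_ofNat]
    rw [show (-Complex.I / 2 : ℂ) = -(Complex.I / 2) by ring, neg_smul, ← smul_neg,
      neg_sub]
  have hb_bd : ∀ β, ‖b β‖ ≤ max C 0 := by
    intro β
    rw [hbdef]
    show ‖((1:ℂ)/2) • ((a + star a) β)‖ ≤ max C 0
    rw [norm_smul]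
    have : ‖(a + star a) β‖ ≤ 2 * max C 0 := by
      calc ‖a β + (a β)ᴴ‖ ≤ ‖a β‖ + ‖(a β)ᴴ‖ := norm_add_le _ _
        _ ≤ max C 0 + max C 0 := by
            rw [Matrix.l2_opNorm_conjTranspose]
            exact add_le_add (hC0 β) (hC0 β)
        _ = 2 * max C 0 := by ring
    calc ‖((1:ℂ)/2)‖ * ‖(a + star a) β‖ ≤ (1/2) * (2 * max C 0) := by
          refine mul_le_mul ?_ this (norm_nonneg _) (by norm_num)
          simp
      _ = max C 0 := by ring
  have hd_bd : ∀ β, ‖d β‖ ≤ max C 0 := by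
    intro β
    rw [hddef]
    show ‖(Complex.I/2) • ((star a - a) β)‖ ≤ max C 0
    rw [norm_smul]
    have : ‖(star a - a) β‖ ≤ 2 * max C 0 := by
      calc ‖(a β)ᴴ - a β‖ ≤ ‖(a β)ᴴ‖ + ‖a β‖ := norm_sub_le _ _
        _ ≤ max C 0 + max C 0 := by
            rw [Matrix.l2_opNorm_conjTranspose]
            exact add_le_add (hC0 β) (hC0 β)
        _ = 2 * max C 0 := by ring
    calc ‖(Complex.I/2 : ℂ)‖ * ‖(star a - a) β‖ ≤ (1/2) * (2 * max C 0) := by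
          refine mul_le_mul ?_ this (norm_nonneg _) (by norm_num)
          simp [norm_div, Complex.norm_I]
      _ = max C 0 := by ring
  have hbmem : b ∈ Fb n := ⟨max C 0, hb_bd⟩
  have hdmem : d ∈ Fb n := ⟨max C 0, hd_bd⟩
  have hbim : (apF 𝔪 b).im = 0 := (state_re_le hst hb_sa hc hb_bd).2
  have hdim : (apF 𝔪 d).im = 0 := (state_re_le hst hd_sa hc hd_bd).2
  have hdecomp : a = b + Complex.I • d := by
    rw [hbdef, hddef, smul_smul]
    funext β
    show a β = ((1:ℂ)/2) • (a β + (a β)ᴴ) + (Complex.I * (Complex.I/2)) • ((a β)ᴴ - a β)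
    rw [show (Complex.I * (Complex.I/2)) = -(1/2 : ℂ) by
      rw [← mul_div_assoc, Complex.I_mul_I]; ring]
    module
  have hdecomp' : star a = b - Complex.I • d := by
    rw [hdecomp, star_add, hb_sa, star_smul, hd_sa]
    simp [Complex.star_def, Complex.conj_I, neg_smul, sub_eq_add_neg]
  have hIdmem : (Complex.I • d) ∈ Fb n := Submodule.smul_mem _ _ hdmem
  have e1 : apF 𝔪 a = apF 𝔪 b + Complex.I * apF 𝔪 d := by
    rw [hdecomp, apF_add 𝔪 hbmem hIdmem, apF_smul 𝔪 _ hdmem]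
  have e2 : apF 𝔪 (star a) = apF 𝔪 b - Complex.I * apF 𝔪 d := by
    rw [hdecomp', apF_sub 𝔪 hbmem hIdmem, apF_smul 𝔪 _ hdmem]
  rw [e1, e2]
  apply Complex.ext <;>
    simp [Complex.add_re, Complex.add_im, Complex.mul_re, Complex.mul_im, hbim, hdim]

lemma apF_norm_le (hst : IsState 𝔪) {a : FI n} {c : ℝ} (hc : 0 ≤ c)
    (ha : ∀ β, ‖a β‖ ≤ c) : ‖apF 𝔪 a‖ ≤ c := by
  have haFb : a ∈ Fb n := ⟨c, ha⟩
  set z := apF 𝔪 a with hz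
  rcases eq_or_ne z 0 with h0 | h0
  · rw [h0]; simpa using hc
  set u : ℂ := (starRingEnd ℂ) z / ‖z‖ with hu
  have hunorm : ‖u‖ = 1 := by
    have hne : ‖z‖ ≠ 0 := norm_ne_zero_iff.mpr h0
    rw [hu, norm_div, RCLike.norm_conj]
    rw [show ‖((‖z‖:ℝ):ℂ)‖ = ‖z‖ by rw [Complex.norm_real, norm_norm]]
    exact div_self hne
  have huz : u * z = (‖z‖ : ℂ) := by
    have hne : ((‖z‖ : ℝ) : ℂ) ≠ 0 :=
      Complex.ofReal_ne_zero.mpr (norm_ne_zero_iff.mpr h0)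
    rw [hu, div_mul_eq_mul_div, RCLike.conj_mul]
    field_simp
    rfl
  set a' : FI n := u • a with ha'
  have ha'mem : a' ∈ Fb n := Submodule.smul_mem _ _ haFb
  have ha'bd : ∀ β, ‖a' β‖ ≤ c := by
    intro β
    show ‖u • a β‖ ≤ c
    rw [norm_smul, hunorm, one_mul]
    exact ha β
  set b : FI n := ((1:ℂ)/2) • (a' + star a') with hbdef
  have hb_sa : star b = b := by
    rw [hbdef, star_smul, star_add, star_star]
    simp [add_comm]
  have hb_bd : ∀ β, ‖b β‖ ≤ c := by
    intro β
    show ‖((1:ℂ)/2) • ((a' + star a') β)‖ ≤ c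
    rw [norm_smul]
    have h2 : ‖(a' + star a') β‖ ≤ 2 * c := by
      calc ‖a' β + (a' β)ᴴ‖ ≤ ‖a' β‖ + ‖(a' β)ᴴ‖ := norm_add_le _ _
        _ ≤ c + c := by
            rw [Matrix.l2_opNorm_conjTranspose]
            exact add_le_add (ha'bd β) (ha'bd β)
        _ = 2 * c := by ring
    calc ‖((1:ℂ)/2)‖ * ‖(a' + star a') β‖ ≤ (1/2) * (2 * c) := by
          refine mul_le_mul ?_ h2 (norm_nonneg _) (by norm_num)
          simp
      _ = c := by ring
  have hapb : apF 𝔪 b = (‖z‖ : ℂ) := by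
    rw [hbdef, apF_smul 𝔪 _ (add_mem ha'mem (star_mem_Fb ha'mem)),
      apF_add 𝔪 ha'mem (star_mem_Fb ha'mem), apF_star hst ha'mem,
      ha', apF_smul 𝔪 _ haFb, ← hz, huz]
    rw [show (starRingEnd ℂ) ((‖z‖:ℝ):ℂ) = ((‖z‖:ℝ):ℂ) from Complex.conj_ofReal _]
    push_cast
    ring
  have := (state_re_le hst hb_sa hc hb_bd).1
  rw [hapb] at this
  simpa using this

end AuxState
section AuxKey
open Matrix
variable {I : Type*} {n : I → ℕ} {𝔪 : Fb n →ₗ[ℂ] ℂ}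

lemma slice2_eq_compress (h : FI2 n n) (γ : I) (i j : Fin (n γ)) (β : I) :
    slice2 h γ i j β
      = (Xmat (n β) (n γ) (Pi.single i 1))ᴴ * h β γ * (Xmat (n β) (n γ) (Pi.single j 1)) := by
  rw [compress_eq]
  ext k l
  show h β γ (k, i) (l, j) = _
  rw [Matrix.of_apply]
  simp only [Pi.single_apply, apply_ite (starRingEnd ℂ), _root_.map_one, map_zero, ite_mul,
    one_mul, zero_mul, mul_ite, mul_one, mul_zero, Finset.sum_ite_eq', Finset.mem_univ, if_true]

lemma slice2_norm_le {h : FI2 n n} {γ : I} {Ch : ℝ} (hCh : ∀ β, ‖h β γ‖ ≤ Ch)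
    (i j : Fin (n γ)) (β : I) : ‖slice2 h γ i j β‖ ≤ Ch := by
  rw [slice2_eq_compress]
  have := norm_compress_le (n β) (n γ) (h β γ) (Pi.single i 1) (Pi.single j 1) (hCh β)
  rwa [l2n_single, l2n_single, one_mul, mul_one] at this

lemma slice2_mem_Fb {h : FI2 n n} {γ : I} {Ch : ℝ} (hCh : ∀ β, ‖h β γ‖ ≤ Ch)
    (i j : Fin (n γ)) : slice2 h γ i j ∈ Fb n :=
  ⟨Ch, slice2_norm_le hCh i j⟩

/-- The element `β ↦ (X_y)ᴴ h(β,γ) X_x` of `F(I)`. -/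
noncomputable def comprF (h : FI2 n n) (γ : I) (y x : Fin (n γ) → ℂ) : FI n :=
  fun β => (Xmat (n β) (n γ) y)ᴴ * h β γ * (Xmat (n β) (n γ) x)

lemma comprF_norm_le {h : FI2 n n} {γ : I} {Ch : ℝ} (hCh : ∀ β, ‖h β γ‖ ≤ Ch)
    (y x : Fin (n γ) → ℂ) (β : I) : ‖comprF h γ y x β‖ ≤ l2n y * Ch * l2n x :=
  norm_compress_le _ _ _ _ _ (hCh β)

lemma comprF_eq_sum (h : FI2 n n) (γ : I) (y x : Fin (n γ) → ℂ) :
    comprF h γ y x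
      = ∑ p : Fin (n γ) × Fin (n γ),
          ((starRingEnd ℂ) (y p.1) * x p.2) • slice2 h γ p.1 p.2 := by
  funext β
  ext k l
  rw [comprF, compress_eq, Matrix.of_apply]
  have hr : (∑ p : Fin (n γ) × Fin (n γ),
        ((starRingEnd ℂ) (y p.1) * x p.2) • slice2 h γ p.1 p.2) β k l
      = ∑ p : Fin (n γ) × Fin (n γ),
          ((starRingEnd ℂ) (y p.1) * x p.2) * h β γ (k, p.1) (l, p.2) := by
    rw [Finset.sum_apply, Matrix.sum_apply]
    exact Finset.sum_congr rfl fun p _ => rfl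
  rw [hr, Fintype.sum_prod_type]

set_option maxHeartbeats 1000000 in
lemma apF_comprF {𝔪 : Fb n →ₗ[ℂ] ℂ} {h : FI2 n n} {γ : I} {Ch : ℝ}
    (hCh : ∀ β, ‖h β γ‖ ≤ Ch) (y x : Fin (n γ) → ℂ) :
    apF 𝔪 (comprF h γ y x)
      = ∑ p : Fin (n γ) × Fin (n γ),
          (starRingEnd ℂ) (y p.1) * x p.2 * apF 𝔪 (slice2 h γ p.1 p.2) := by
  have hmem : ∀ p ∈ (Finset.univ : Finset (Fin (n γ) × Fin (n γ))),
      ((starRingEnd ℂ) (y p.1) * x p.2) • slice2 h γ p.1 p.2 ∈ Fb n := fun p _ =>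
    Submodule.smul_mem (Fb n) ((starRingEnd ℂ) (y p.1) * x p.2) (slice2_mem_Fb hCh p.1 p.2)
  rw [comprF_eq_sum,
    apF_sum 𝔪 Finset.univ
      (fun p : Fin (n γ) × Fin (n γ) => ((starRingEnd ℂ) (y p.1) * x p.2) • slice2 h γ p.1 p.2)
      hmem]
  exact Finset.sum_congr rfl fun p _ => apF_smul 𝔪 _ (slice2_mem_Fb hCh p.1 p.2)

lemma fTenR_norm_le (hst : IsState 𝔪) {h : FI2 n n} {γ : I} {Ch : ℝ} (hc : 0 ≤ Ch)
    (hCh : ∀ β, ‖h β γ‖ ≤ Ch) : ‖fTenR 𝔪 h γ‖ ≤ Ch := by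
  rw [Matrix.l2_opNorm_def]
  refine ContinuousLinearMap.opNorm_le_bound _ hc fun x0 => ?_
  set M : Mat (n γ) := fTenR 𝔪 h γ with hM
  set x : Fin (n γ) → ℂ := WithLp.equiv 2 _ x0 with hx
  set v : Fin (n γ) → ℂ := M *ᵥ x with hv
  simp only [LinearEquiv.trans_apply, LinearMap.coe_toContinuousLinearMap',
    Matrix.toEuclideanLin_apply]
  have hnv : ‖WithLp.toLp 2 (M *ᵥ x0.ofLp)‖ = l2n v := by
    rw [EuclideanSpace.norm_eq, l2n]
    congr 1
  have hnx : ‖x0‖ = l2n x := by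
    rw [EuclideanSpace.norm_eq, l2n]
    congr 1
  rw [hnv, hnx]
  -- main estimate
  have e2 : dotProduct (star v) v = apF 𝔪 (comprF h γ v x) := by
    rw [apF_comprF hCh]
    rw [dotProduct, Fintype.sum_prod_type]
    refine Finset.sum_congr rfl fun i _ => ?_
    rw [hv, Matrix.mulVec, dotProduct, Finset.mul_sum]
    refine Finset.sum_congr rfl fun j _ => ?_
    rw [hM]
    show (star v) i * (M i j * x j) = (starRingEnd ℂ) (v i) * x j * apF 𝔪 (slice2 h γ i j)
    rw [show M i j = apF 𝔪 (slice2 h γ i j) from rfl]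
    rw [Pi.star_apply, Complex.star_def]
    ring
  have e1 : dotProduct (star v) v = (((l2n v)^2 : ℝ) : ℂ) := by
    rw [dotProduct, l2n_sq]
    push_cast
    refine Finset.sum_congr rfl fun i _ => ?_
    rw [Pi.star_apply, Complex.star_def, RCLike.conj_mul]
    norm_cast
  have hb : ‖apF 𝔪 (comprF h γ v x)‖ ≤ l2n v * Ch * l2n x :=
    apF_norm_le hst (mul_nonneg (mul_nonneg (l2n_nonneg v) hc) (l2n_nonneg x)) (comprF_norm_le hCh v x)
  rw [← e2, e1] at hb
  have hb' : (l2n v)^2 ≤ l2n v * Ch * l2n x := by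
    rwa [Complex.norm_real, Real.norm_of_nonneg (sq_nonneg _)] at hb
  rcases (l2n_nonneg v).eq_or_lt with h0 | h0
  · rw [← h0]
    exact mul_nonneg hc (l2n_nonneg x)
  · have : l2n v * l2n v ≤ (Ch * l2n x) * l2n v := by nlinarith
    exact le_of_mul_le_mul_right this h0

end AuxKey
/-- If `Δ(f) - f ⊗ 1 - 1 ⊗ f` is bounded then `Δ(f) - f ⊗ 1 ∈ F_{b:1}(𝔾 × 𝔾)` and
`F = (𝔪 ⊗̃ id)(Δ(f) - f ⊗ 1)` satisfies `sup ‖F - f‖ ≤ sup ‖Δ(f) - f ⊗ 1 - 1 ⊗ f‖`. -/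
theorem stmt_15 {I : Type*} (n : I → ℕ) (hn : ∀ γ, 0 < n γ) (C : Comul n)
    (𝔪 : Fb n →ₗ[ℂ] ℂ) (h𝔪 : IsRIMean C 𝔪)
    (f : FI n) (g h : FI2 n n)
    (hgdef : ∀ β γ : I, g β γ = C.ind f β γ - f β ⊗ₖ (1 : Mat (n γ)))
    (hhdef : ∀ β γ : I, h β γ
      = C.ind f β γ - f β ⊗ₖ (1 : Mat (n γ)) - (1 : Mat (n β)) ⊗ₖ f γ)
    (hb : ∃ Ch : ℝ, ∀ β γ : I, ‖h β γ‖ ≤ Ch) :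
    Fb1 g ∧
    ∀ Ch : ℝ, (∀ β γ : I, ‖h β γ‖ ≤ Ch) →
      ∀ γ : I, ‖fTenR 𝔪 g γ - f γ‖ ≤ Ch := by
  obtain ⟨Ch0, hCh0⟩ := hb
  have hst : IsState 𝔪 := h𝔪.1
  have hgh : ∀ β γ' : I, g β γ' = h β γ' + (1 : Mat (n β)) ⊗ₖ f γ' := by
    intro β γ'
    rw [hgdef, hhdef]
    abel
  constructor
  · intro γ
    refine ⟨Ch0 + ∑ j, l2n (fun i => f γ i j), fun β => ?_⟩
    rw [hgh β γ]
    exact (norm_add_le _ _).trans (add_le_add (hCh0 β γ) (norm_kron_one_le _ _ _))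
  · intro Ch hCh γ
    have hc : 0 ≤ Ch := le_trans (norm_nonneg _) (hCh γ γ)
    have hslice : ∀ i j : Fin (n γ), slice2 h γ i j ∈ Fb n := fun i j =>
      slice2_mem_Fb (fun β => hCh β γ) i j
    have hkey : fTenR 𝔪 g γ - f γ = fTenR 𝔪 h γ := by
      ext i j
      rw [Matrix.sub_apply]
      have hgs : slice2 g γ i j = slice2 h γ i j + (f γ i j) • (1 : FI n) := by
        funext β
        ext k l
        show g β γ (k, i) (l, j) = _
        rw [hgh β γ]
        show h β γ (k, i) (l, j) + ((1 : Mat (n β)) ⊗ₖ f γ) ((k, i)) ((l, j))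
            = slice2 h γ i j β k l + ((f γ i j) • (1 : FI n)) β k l
        rw [Matrix.kroneckerMap_apply]
        show _ = h β γ (k, i) (l, j) + f γ i j * (1 : Mat (n β)) k l
        rw [mul_comm]
      show apF 𝔪 (slice2 g γ i j) - f γ i j = apF 𝔪 (slice2 h γ i j)
      rw [hgs, apF_add 𝔪 (hslice i j) (Submodule.smul_mem _ _ one_mem_Fb),
        apF_smul 𝔪 _ one_mem_Fb, hst.2, mul_one]
      ring
    rw [hkey]
    exact fTenR_norm_le hst hc (fun β => hCh β γ)

end DQSG
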